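/- arXiv:2011.12900 — 4 statements merged into one kernel-verified Lean document; each statement's English description precedes it below -/
import Mathlib

section
/- Let V be a finite-dimensional real vector space. For every subset E of V that generates a dense additive subgroup of V, for every δ > 0, and for every basis B of V with B ⊆ E, there exists a finite subset F ⊆ E with at most 2·dim V elements such that the additive subgroup generated by B ∪ F is δ-dense in V (i.e., every point of V is within distance δ of some element of this subgroup). -/
open Module Set Metric

universe u

/-- Reduction modulo the ℤ-span of a real-spanning finset: every vector is within a
uniform distance of the generated additive subgroup. -/
lemma reduce_aux {V : Type u} [NormedAddCommGroup V] [NormedSpace ℝ V]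
    (s : Finset V) (hs : Submodule.span ℝ (s : Set V) = ⊤) :
    ∃ R : ℝ, ∀ v : V, ∃ g ∈ AddSubgroup.closure (s : Set V), ‖v - g‖ ≤ R := by
  refine ⟨∑ i ∈ s, ‖i‖, fun v => ?_⟩
  have hv : v ∈ Submodule.span ℝ (s : Set V) := by rw [hs]; trivial
  obtain ⟨f, -, hf⟩ := Submodule.mem_span_finset.1 hv
  refine ⟨∑ i ∈ s, ⌊f i⌋ • i, ?_, ?_⟩
  · exact AddSubgroup.sum_mem _ fun i hi =>
      AddSubgroup.zsmul_mem _ (AddSubgroup.subset_closure (by exact_mod_cast hi)) _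
  · have h1 : v - ∑ i ∈ s, ⌊f i⌋ • i = ∑ i ∈ s, Int.fract (f i) • i := by
      rw [← hf, ← Finset.sum_sub_distrib]
      refine Finset.sum_congr rfl fun i _ => ?_
      rw [← Int.cast_smul_eq_zsmul ℝ, ← sub_smul, Int.self_sub_floor]
    rw [h1]
    calc ‖∑ i ∈ s, Int.fract (f i) • i‖ ≤ ∑ i ∈ s, ‖Int.fract (f i) • i‖ :=
          norm_sum_le _ _
      _ ≤ ∑ i ∈ s, ‖i‖ := by
          refine Finset.sum_le_sum fun i _ => ?_
          rw [norm_smul, Real.norm_eq_abs, abs_of_nonneg (Int.fract_nonneg _)]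
          nlinarith [Int.fract_nonneg (f i), Int.fract_lt_one (f i), norm_nonneg i]

lemma exists_small {V : Type u} [NormedAddCommGroup V] [NormedSpace ℝ V]
    [FiniteDimensional ℝ V]
    (s : Finset V) (hs : Submodule.span ℝ (s : Set V) = ⊤) (E : Set V)
    (hE : Dense (AddSubgroup.closure ((s : Set V) ∪ E) : Set V))
    (hnd : ¬ Dense (AddSubgroup.closure (s : Set V) : Set V))
    {δ : ℝ} (hδ : 0 < δ) :
    ∃ e ∈ E, ∃ x ∈ AddSubgroup.closure ((s : Set V) ∪ {e}), x ≠ 0 ∧ ‖x‖ ≤ δ := by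
  by_contra hcon
  push_neg at hcon
  have hsmall : ∀ e ∈ E, ∀ x ∈ AddSubgroup.closure ((s : Set V) ∪ {e}),
      ‖x‖ ≤ δ → x = 0 := by
    intro e he x hx hxn
    by_contra h0
    exact absurd hxn (not_le.2 (hcon e he x hx h0))
  obtain ⟨R, hR⟩ := reduce_aux s hs
  obtain ⟨t, htfin, htcov⟩ := (totallyBounded_iff.1
    (isCompact_closedBall (0 : V) R).totallyBounded) (δ/2) (by positivity)
  set N : ℕ := htfin.toFinset.card with hN
  have key : ∀ e ∈ E, ∃ m : ℕ, 0 < m ∧ m ≤ N ∧ m • e ∈ AddSubgroup.closure (s : Set V) := by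
    intro e he
    choose g hg hgn using fun k : ℕ => hR (k • e)
    have hmem : ∀ k : ℕ, ∃ y ∈ t, (k • e - g k) ∈ ball y (δ/2) := by
      intro k
      have : (k • e - g k) ∈ closedBall (0 : V) R := by
        rw [mem_closedBall_zero_iff]; exact hgn k
      simpa using htcov this
    choose c hc hc2 using hmem
    have hmap : ∀ k ∈ Finset.range (N+1), c k ∈ htfin.toFinset := by
      intro k _; exact htfin.mem_toFinset.2 (hc k)
    have main : ∀ a b : ℕ, b < a → a ∈ Finset.range (N+1) → c a = c b →
        ∃ m : ℕ, 0 < m ∧ m ≤ N ∧ m • e ∈ AddSubgroup.closure (s : Set V) := by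
      intro a b hba ha hcab
      have h1 := hc2 a
      have h2 := hc2 b
      rw [hcab, mem_ball] at h1
      rw [mem_ball] at h2
      have hdist : ‖(a • e - g a) - (b • e - g b)‖ ≤ δ := by
        rw [← dist_eq_norm]
        have : dist (a•e - g a) (b•e - g b) < δ := by
          calc dist (a•e-g a) (b•e-g b)
              ≤ dist (a•e-g a) (c b) + dist (c b) (b•e-g b) := dist_triangle _ _ _
            _ < δ/2 + δ/2 := by
                rw [dist_comm (c b)]; exact add_lt_add h1 h2
            _ = δ := by ring
        linarith
      have hid : (a • e - g a) - (b • e - g b) = ((a:ℤ) - (b:ℤ)) • e - (g a - g b) := by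
        rw [sub_smul, natCast_zsmul, natCast_zsmul]; abel
      have hmemx : (a • e - g a) - (b • e - g b) ∈
          AddSubgroup.closure ((s:Set V) ∪ {e}) := by
        rw [hid]
        have hee : e ∈ AddSubgroup.closure ((s:Set V) ∪ {e}) :=
          AddSubgroup.subset_closure (by simp)
        have hsub : AddSubgroup.closure (s:Set V) ≤
            AddSubgroup.closure ((s:Set V) ∪ {e}) :=
          AddSubgroup.closure_mono subset_union_left
        exact AddSubgroup.sub_mem _ (AddSubgroup.zsmul_mem _ hee _)
          (AddSubgroup.sub_mem _ (hsub (hg a)) (hsub (hg b)))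
      have hzero := hsmall e he _ hmemx hdist
      rw [hid, sub_eq_zero] at hzero
      refine ⟨a - b, Nat.sub_pos_of_lt hba, ?_, ?_⟩
      · have : a ≤ N := Nat.lt_succ_iff.1 (Finset.mem_range.1 ha)
        omega
      · have : ((a - b : ℕ) : ℤ) • e = g a - g b := by
          rw [Nat.cast_sub hba.le, hzero]
        rw [← natCast_zsmul, this]
        exact AddSubgroup.sub_mem _ (hg a) (hg b)
    obtain ⟨k, hk, k', hk', hkk, hck⟩ :=
      Finset.exists_ne_map_eq_of_card_lt_of_maps_to (by simp [hN]) hmap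
    rcases hkk.lt_or_gt with hlt | hlt
    · exact main k' k hlt hk' hck.symm
    · exact main k k' hlt hk hck
  -- Now every e ∈ E satisfies (N !) • e ∈ ⟨s⟩, so the generated group is not dense.
  set M : ℕ := N.factorial with hMdef
  have hM0 : (M:ℝ) ≠ 0 := Nat.cast_ne_zero.2 N.factorial_ne_zero
  have hMe : ∀ e ∈ E, (M:ℝ) • e ∈ AddSubgroup.closure (s : Set V) := by
    intro e he
    obtain ⟨m, hm0, hmN, hme⟩ := key e he
    have hdvd : m ∣ M := Nat.dvd_factorial hm0 hmN
    have hsp : M • e = (M / m) • (m • e) := by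
      rw [← mul_nsmul, Nat.mul_div_cancel' hdvd]
    rw [Nat.cast_smul_eq_nsmul, hsp]
    exact AddSubgroup.nsmul_mem _ hme _
  have hsub : (AddSubgroup.closure ((s:Set V) ∪ E) : Set V) ⊆
      (fun v : V => (M:ℝ) • v) ⁻¹' (AddSubgroup.closure (s:Set V) : Set V) := by
    have hle : AddSubgroup.closure ((s:Set V) ∪ E) ≤
        (AddSubgroup.closure (s:Set V)).comap
          (DistribMulAction.toAddMonoidHom V (M:ℝ)) := by
      rw [AddSubgroup.closure_le]
      rintro v (hv | hv)
      · rw [SetLike.mem_coe, AddSubgroup.mem_comap]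
        show (M:ℝ) • v ∈ _
        rw [Nat.cast_smul_eq_nsmul]
        exact AddSubgroup.nsmul_mem _ (AddSubgroup.subset_closure hv) _
      · rw [SetLike.mem_coe, AddSubgroup.mem_comap]
        exact hMe v hv
    intro v hv
    exact hle hv
  have hdense : Dense ((fun v : V => (M:ℝ) • v) ⁻¹'
      (AddSubgroup.closure (s:Set V) : Set V)) := hE.mono hsub
  let h : V ≃ₜ V := Homeomorph.smulOfNeZero (M:ℝ) hM0
  have hcoe : ⇑h = fun v : V => (M:ℝ) • v := rfl
  rw [← hcoe] at hdense
  apply hnd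
  rw [dense_iff_closure_eq]
  apply univ_subset_iff.1
  calc univ = h '' univ := (image_univ.trans h.surjective.range_eq).symm
    _ = h '' closure (⇑h ⁻¹' (AddSubgroup.closure (s:Set V) : Set V)) := by
        rw [hdense.closure_eq]
    _ = closure (h '' (⇑h ⁻¹' (AddSubgroup.closure (s:Set V) : Set V))) :=
        h.image_closure _
    _ ⊆ closure (AddSubgroup.closure (s:Set V) : Set V) :=
        closure_mono (image_preimage_subset _ _)

lemma lemA : ∀ (n : ℕ) (V : Type u) [NormedAddCommGroup V] [NormedSpace ℝ V]
    [FiniteDimensional ℝ V], finrank ℝ V ≤ n →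
    ∀ (s : Finset V), Submodule.span ℝ (s : Set V) = ⊤ →
    ∀ (E : Set V), Dense (AddSubgroup.closure ((s : Set V) ∪ E) : Set V) →
    ∀ δ : ℝ, 0 < δ →
    ∃ F : Finset V, (F : Set V) ⊆ E ∧ F.card ≤ finrank ℝ V ∧
      ∀ v : V, ∃ x ∈ AddSubgroup.closure ((s : Set V) ∪ (F : Set V)), ‖v - x‖ ≤ δ := by
  intro n
  induction n with
  | zero =>
    intro V _ _ _ hrk s hs E hE δ hδ
    have h0 : finrank ℝ V = 0 := Nat.le_zero.1 hrk
    have : Subsingleton V := finrank_zero_iff.1 h0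
    refine ⟨∅, by simp, by simp, fun v => ⟨0, AddSubgroup.zero_mem _, ?_⟩⟩
    have : v - 0 = 0 := Subsingleton.elim _ _
    rw [this, norm_zero]; exact hδ.le
  | succ n IH =>
    intro V _ _ _ hrk s hs E hE δ hδ
    by_cases hd : Dense (AddSubgroup.closure (s : Set V) : Set V)
    · refine ⟨∅, by simp, by simp, fun v => ?_⟩
      obtain ⟨x, hx⟩ := Metric.dense_iff.1 hd v δ hδ
      obtain ⟨hx1, hx2⟩ := hx
      refine ⟨x, ?_, ?_⟩
      · have hu : (↑s : Set V) ∪ ((∅ : Finset V) : Set V) = (↑s : Set V) := by simp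
        rw [hu]
        exact hx2
      · rw [← dist_eq_norm]
        exact (mem_ball'.1 hx1).le
    · obtain ⟨e, heE, x, hxG, hx0, hxn⟩ :=
        exists_small s hs E hE hd (show (0:ℝ) < δ/4 by positivity)
      classical
      set S : Submodule ℝ V := Submodule.span ℝ {x} with hS
      haveI : IsClosed (S : Set V) := S.closed_of_finiteDimensional
      set π : V →ₗ[ℝ] V ⧸ S := S.mkQ with hπ
      have hπsurj : Function.Surjective π := S.mkQ_surjective
      have hπcont : Continuous π := by
        have : LipschitzWith 1 π := by
          refine LipschitzWith.of_dist_le_mul fun a b => ?_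
          rw [dist_eq_norm, dist_eq_norm, ← map_sub]
          simpa [hπ] using Submodule.Quotient.norm_mk_le S (a - b)
        exact this.continuous
      -- the quotient data
      set s' : Finset (V ⧸ S) := s.image π with hs'def
      have hs'span : Submodule.span ℝ (s' : Set (V ⧸ S)) = ⊤ := by
        rw [hs'def, Finset.coe_image, Submodule.span_image, hs, Submodule.map_top,
          LinearMap.range_eq_top]
        exact hπsurj
      set E' : Set (V ⧸ S) := π '' E with hE'def
      have hE' : Dense (AddSubgroup.closure ((s' : Set (V ⧸ S)) ∪ E') : Set (V ⧸ S)) := by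
        have him : (s' : Set (V ⧸ S)) ∪ E' = π '' ((s : Set V) ∪ E) := by
          rw [hs'def, Finset.coe_image, hE'def, image_union]
        rw [him]
        have h1 : Dense (π '' (AddSubgroup.closure ((s : Set V) ∪ E) : Set V)) :=
          (hπsurj.denseRange).dense_image hπcont hE
        refine h1.mono ?_
        rintro y ⟨z, hz, rfl⟩
        have h2 : π z ∈ (AddSubgroup.closure ((s:Set V) ∪ E)).map π.toAddMonoidHom :=
          AddSubgroup.mem_map_of_mem _ hz
        rw [AddMonoidHom.map_closure] at h2
        exact h2
      have hrk' : finrank ℝ (V ⧸ S) ≤ n := by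
        have h1 : finrank ℝ (V ⧸ S) + finrank ℝ S = finrank ℝ V :=
          Submodule.finrank_quotient_add_finrank S
        have h2 : finrank ℝ S = 1 := finrank_span_singleton hx0
        omega
      obtain ⟨F', hF'E, hF'card, hF'dense⟩ := IH (V ⧸ S) hrk' s' hs'span E' hE'
        (δ/2) (by positivity)
      -- lift F' into E
      have hlift : ∀ y ∈ F', ∃ z ∈ E, π z = y := fun y hy => hF'E hy
      choose l hlE hlπ using hlift
      set F : Finset V := insert e (F'.attach.image fun y => l y.1 y.2) with hF
      have hFE : (F : Set V) ⊆ E := by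
        intro z hz
        rw [hF] at hz
        simp only [Finset.coe_insert, Set.mem_insert_iff, Finset.coe_image,
          Set.mem_image, Finset.mem_coe, Finset.mem_attach, true_and] at hz
        rcases hz with rfl | ⟨y, _, rfl⟩
        · exact heE
        · exact hlE _ _
      have hFcard : F.card ≤ finrank ℝ V := by
        have h1 : F.card ≤ (F'.attach.image fun y => l y.1 y.2).card + 1 := by
          rw [hF]; exact Finset.card_insert_le _ _
        have h2 : (F'.attach.image fun y => l y.1 y.2).card ≤ F'.card := by
          calc (F'.attach.image fun y => l y.1 y.2).card ≤ F'.attach.card :=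
              Finset.card_image_le
            _ = F'.card := F'.card_attach
        have h3 : finrank ℝ (V ⧸ S) + 1 = finrank ℝ V := by
          have := Submodule.finrank_quotient_add_finrank S
          rw [finrank_span_singleton hx0] at this
          omega
        omega
      refine ⟨F, hFE, hFcard, fun v => ?_⟩
      obtain ⟨x', hx'G, hx'n⟩ := hF'dense (π v)
      -- x' comes from the subgroup generated downstairs
      have hx'mem : x' ∈ (AddSubgroup.closure ((s : Set V) ∪ (F : Set V))).map
          π.toAddMonoidHom := by
        rw [AddMonoidHom.map_closure]
        refine AddSubgroup.closure_mono ?_ hx'G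
        rintro y (hy | hy)
        · rw [hs'def, Finset.coe_image] at hy
          obtain ⟨z, hz, rfl⟩ := hy
          exact ⟨z, Or.inl hz, rfl⟩
        · refine ⟨l y hy, Or.inr ?_, hlπ y hy⟩
          rw [hF]
          simp only [Finset.coe_insert, Set.mem_insert_iff, Finset.coe_image,
            Set.mem_image, Finset.mem_coe, Finset.mem_attach, true_and]
          exact Or.inr ⟨⟨y, hy⟩, rfl⟩
      obtain ⟨g, hgG, hgπ⟩ := hx'mem
      -- quotient norm: get a good representative
      have hgπ' : π g = x' := hgπ
      have hnorm : ‖π (v - g)‖ ≤ δ/2 := by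
        rw [map_sub, hgπ']
        exact hx'n
      obtain ⟨m, hm1, hm2⟩ := Submodule.Quotient.norm_mk_lt (π (v - g))
        (show (0:ℝ) < δ/8 by positivity)
      have hmS : v - g - m ∈ S := by
        have h3 : (Submodule.Quotient.mk (v - g) : V ⧸ S) = Submodule.Quotient.mk m :=
          hm1.symm
        exact (Submodule.Quotient.eq S).1 h3
      obtain ⟨tc, htc⟩ := Submodule.mem_span_singleton.1 hmS
      set j : ℤ := ⌊tc⌋ with hj
      refine ⟨g + j • x, ?_, ?_⟩
      · refine AddSubgroup.add_mem _ hgG (AddSubgroup.zsmul_mem _ ?_ _)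
        refine AddSubgroup.closure_mono ?_ hxG
        apply union_subset_union_right
        rw [hF]
        intro w hw
        rw [Set.mem_singleton_iff] at hw
        subst hw
        simp
      · have hveq : v - (g + j • x) = m + (tc - (j:ℝ)) • x := by
          have : v - g = m + tc • x := by rw [htc]; abel
          rw [← Int.cast_smul_eq_zsmul ℝ, sub_smul]
          rw [sub_add_eq_sub_sub, this]
          abel
        rw [hveq]
        have hb1 : ‖m + (tc - (j:ℝ)) • x‖ ≤ ‖m‖ + ‖(tc - (j:ℝ)) • x‖ := norm_add_le _ _
        have hb2 : ‖(tc - (j:ℝ)) • x‖ ≤ ‖x‖ := by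
          rw [norm_smul, Real.norm_eq_abs]
          have h1 : 0 ≤ tc - (j:ℝ) := by
            rw [hj]; exact sub_nonneg.2 (Int.floor_le tc)
          have h2 : tc - (j:ℝ) ≤ 1 := by
            rw [hj]
            have := Int.lt_floor_add_one tc
            linarith
          rw [abs_of_nonneg h1]
          nlinarith [norm_nonneg x]
        have hm2' : ‖m‖ < δ/2 + δ/8 := lt_of_lt_of_le hm2 (by linarith)
        have : ‖x‖ ≤ δ/4 := hxn
        linarith

/-- **Density Lemma (Lemma 6.1 of Dang–Glorieux, Lemma 8.3 in the paper).**
Let `V` be a finite-dimensional real normed vector space. For every subset `E ⊆ V`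
generating a dense additive subgroup of `V`, every `δ > 0`, and every basis `b` of `V`
whose range is contained in `E`, there is a finite subset `F ⊆ E` with at most
`2 · dim V` elements such that the additive subgroup generated by `range b ∪ F` is
`δ`-dense in `V`. -/
theorem stmt0 (V : Type*) [NormedAddCommGroup V] [NormedSpace ℝ V]
    [FiniteDimensional ℝ V]
    (E : Set V) (hE : Dense (AddSubgroup.closure E : Set V))
    (δ : ℝ) (hδ : 0 < δ)
    (ι : Type*) [Fintype ι] (b : Module.Basis ι ℝ V) (hb : Set.range b ⊆ E) :
    ∃ F : Finset V, (F : Set V) ⊆ E ∧ F.card ≤ 2 * Module.finrank ℝ V ∧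
      ∀ v : V, ∃ x ∈ AddSubgroup.closure (Set.range b ∪ (F : Set V)), ‖v - x‖ ≤ δ := by
  classical
  set s : Finset V := (Set.finite_range b).toFinset with hsdef
  have hscoe : (s : Set V) = Set.range b := (Set.finite_range b).coe_toFinset
  have hsspan : Submodule.span ℝ (s : Set V) = ⊤ := by rw [hscoe]; exact b.span_eq
  have hsE : (s : Set V) ∪ E = E := by
    rw [hscoe]; exact union_eq_self_of_subset_left hb
  have hE2 : Dense (AddSubgroup.closure ((s : Set V) ∪ E) : Set V) := by
    rw [hsE]; exact hE
  obtain ⟨F, hFE, hFcard, hFd⟩ := lemA (finrank ℝ V) V le_rfl s hsspan E hE2 δ hδ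
  refine ⟨F, hFE, hFcard.trans (by omega), fun v => ?_⟩
  obtain ⟨x, hx1, hx2⟩ := hFd v
  refine ⟨x, ?_, hx2⟩
  rw [← hscoe]
  exact hx1
end

section
/- Let G be a connected real semisimple Lie group without compact factors, g ∈ G loxodromic, and [g⁻] the unipotent Bruhat section with domain b(g⁻). Then for all integers n ≥ 1 and all ξ in the basin of attraction b(g⁻), the cocycle satisfies β_{[g⁻]}(gⁿ, ξ) = ℒ_{[g⁻]}(g)ⁿ; i.e., the AM-valued cocycle of gⁿ is constant on the whole basin of attraction and equals the n-th power of the extended Jordan projection. -/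
/-- **The cocycle on the basin of attraction (Lemma 4.9 of the paper).**
Abstract setting: `G` plays the role of a connected real linear semisimple Lie group
of non-compact type, with subgroups `N`, `N⁻ = Nm`, `AM` satisfying: `AM` normalizes
`N⁻`, and the Bruhat-type decomposition `N⁻·AM·N` is unique (`hUniq`).  The element
`g` is loxodromic, diagonalized by `h_g` (of Bruhat coordinates `(g⁺, g⁻; e_{AM})`):
`g·h_g = h_g·L` with `L = ℒ_{[g⁻]}(g) ∈ AM` (in fact `L ∈ M·A⁺⁺`).  A point of the
basin `b(g⁻) = h_g·N⁻·η₀` has section value `[g⁻](ξ) = h_g·u₀` with `u₀ ∈ N⁻`.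
Conclusion: for every `n ≥ 1` and every point of the basin, the cocycle
`β_{[g⁻]}(gⁿ, ξ)` — the unique element `x ∈ AM` with
`gⁿ·h_g·u₀ ∈ h_g·N⁻·x·N` — equals `ℒ_{[g⁻]}(g)ⁿ = Lⁿ` (and the `N`-component is
trivial). -/
theorem stmt12 (G : Type*) [Group G]
    (N Nm AM : Subgroup G)
    (hnormNm : ∀ x ∈ AM, ∀ u ∈ Nm, x * u * x⁻¹ ∈ Nm)
    (hUniq : ∀ u₁ ∈ Nm, ∀ x₁ ∈ AM, ∀ v₁ ∈ N, ∀ u₂ ∈ Nm, ∀ x₂ ∈ AM, ∀ v₂ ∈ N,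
      u₁ * x₁ * v₁ = u₂ * x₂ * v₂ → u₁ = u₂ ∧ x₁ = x₂ ∧ v₁ = v₂)
    (g hg L : G) (hL : L ∈ AM) (hgh : g * hg = hg * L)
    (n : ℕ) (hn : 1 ≤ n) (u₀ : G) (hu₀ : u₀ ∈ Nm) :
    (∃ um ∈ Nm, g ^ n * (hg * u₀) = hg * um * L ^ n) ∧
    (∀ x ∈ AM, (∃ um ∈ Nm, ∃ v ∈ N, g ^ n * (hg * u₀) = hg * um * x * v) →
      x = L ^ n) := by
  have hpow : ∀ m : ℕ, g ^ m * hg = hg * L ^ m := by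
    intro m
    induction m with
    | zero => simp
    | succ k ih =>
      rw [pow_succ', pow_succ', mul_assoc, ih, ← mul_assoc, hgh, mul_assoc]
  have hLn : L ^ n ∈ AM := pow_mem hL n
  have hum : L ^ n * u₀ * (L ^ n)⁻¹ ∈ Nm := hnormNm _ hLn _ hu₀
  have key : g ^ n * (hg * u₀) = hg * (L ^ n * u₀ * (L ^ n)⁻¹) * L ^ n := by
    rw [← mul_assoc, hpow]; group
  refine ⟨⟨_, hum, key⟩, ?_⟩
  rintro x hx ⟨um, hum', v, hv, heq⟩
  have := hUniq um hum' x hx v hv _ hum (L ^ n) hLn 1 (one_mem N)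
    (by
      have : hg * um * x * v = hg * (L ^ n * u₀ * (L ^ n)⁻¹) * (L ^ n) * 1 := by
        rw [mul_one, ← key, heq]
      exact mul_left_cancel (a := hg) (by
        rw [show hg * (um * x * v) = hg * um * x * v by group,
          show hg * (L ^ n * u₀ * (L ^ n)⁻¹ * L ^ n * 1) = hg * (L ^ n * u₀ * (L ^ n)⁻¹) * L ^ n * 1 by group, this]))
  exact this.2.1
end

section
/- Let G be a connected real semisimple Lie group without compact factors, g ∈ G loxodromic, n ≥ 1, and ξ ∈ b(g⁻). For any compact Bruhat sections s₀, s₁, s₂ with ξ ∈ F_{s₀}, g⁺ ∈ F_{s₁}, gⁿ·ξ ∈ F_{s₂}, the cocycle factorizes exactly as β_{s₂,s₀}(gⁿ, ξ) = ℛ_{s₁,s₂}(g; gⁿξ)⁻¹ · ℒ_{s₁}(g)ⁿ · ℛ_{s₁,s₀}(g; ξ), where ℛ_{s₁,s₂}(g; η) := 𝒯_{s₁,[g⁻]}(g⁺)·𝒯_{[g⁻],s₂}(η) is the Ratio map. -/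
/-- **Exact factorization of the cocycle via Ratio maps (Proposition 4.11).**
Abstract setting: `G` plays the role of a connected real linear semisimple Lie group
of non-compact type with minimal parabolic `B ⊇ N, AM`, opposite unipotent `Nm = N⁻`,
`N ⊓ AM = ⊥` and `AM` normalizing `N` and `N⁻`.  The Furstenberg boundary is
`F = G ⧸ B`; `e` inverts `u ↦ u·η₀` on `N⁻·η₀` and the unipotent Bruhat section with
domain the basin `b(g⁻) = h_g·N⁻·η₀` is `[g⁻] : ξ ↦ h_g·e(h_g⁻¹·ξ)`.  The element `g`
is loxodromic: `g·h_g = h_g·L`, `L = ℒ_{[g⁻]}(g) ∈ AM`, with attracting point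
`g⁺ = h_g·η₀` and `ξ = h_g·u₀·η₀ ∈ b(g⁻)`.  Given (compact Bruhat) sections
`s₀, s₁, s₂` with `ξ ∈ D₀`, `g⁺ ∈ D₁`, `gⁿ·ξ ∈ D₂`, the transition elements
`Ta = 𝒯_{s₁,[g⁻]}(g⁺)`, `Tb2 = 𝒯_{[g⁻],s₂}(gⁿξ)`, `Tb0 = 𝒯_{[g⁻],s₀}(ξ)`, the
extended Jordan projection `L₁ = ℒ_{s₁}(g)`, and the cocycle `β₂₀ = β_{s₂,s₀}(gⁿ,ξ)`,
all characterized by their defining properties, satisfy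
`β_{s₂,s₀}(gⁿ,ξ) = ℛ_{s₁,s₂}(g; gⁿξ)⁻¹ · ℒ_{s₁}(g)ⁿ · ℛ_{s₁,s₀}(g; ξ)` where
`ℛ_{s₁,s}(g; η) = Ta · 𝒯_{[g⁻],s}(η)`, i.e.
`β₂₀ = (Ta·Tb2)⁻¹ · L₁ⁿ · (Ta·Tb0)`. -/
theorem stmt13 (G : Type*) [Group G]
    (B N Nm AM : Subgroup G)
    (hNB : N ≤ B) (hAMB : AM ≤ B) (hdisj : N ⊓ AM = ⊥)
    (hnormN : ∀ x ∈ AM, ∀ u ∈ N, x * u * x⁻¹ ∈ N)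
    (hnormNm : ∀ x ∈ AM, ∀ u ∈ Nm, x * u * x⁻¹ ∈ Nm)
    (hUniq : ∀ u₁ ∈ Nm, ∀ x₁ ∈ AM, ∀ v₁ ∈ N, ∀ u₂ ∈ Nm, ∀ x₂ ∈ AM, ∀ v₂ ∈ N,
      u₁ * x₁ * v₁ = u₂ * x₂ * v₂ → u₁ = u₂ ∧ x₁ = x₂ ∧ v₁ = v₂)
    (e : G ⧸ B → G) (he : ∀ u ∈ Nm, e ((u : G) : G ⧸ B) = u)
    (g hg L : G) (hL : L ∈ AM) (hgh : g * hg = hg * L)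
    (n : ℕ) (hn : 1 ≤ n)
    (u₀ : G) (hu₀ : u₀ ∈ Nm)
    (D0 D1 D2 : Set (G ⧸ B)) (s0 s1 s2 : G ⧸ B → G)
    (hs0 : ∀ η ∈ D0, ((s0 η : G) : G ⧸ B) = η)
    (hs1 : ∀ η ∈ D1, ((s1 η : G) : G ⧸ B) = η)
    (hs2 : ∀ η ∈ D2, ((s2 η : G) : G ⧸ B) = η)
    (hξ0 : ((hg * u₀ : G) : G ⧸ B) ∈ D0)
    (hg1 : ((hg : G) : G ⧸ B) ∈ D1)
    (hξ2 : (g ^ n) • ((hg * u₀ : G) : G ⧸ B) ∈ D2)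
    (Ta Tb2 Tb0 L1 β20 : G)
    (hTaAM : Ta ∈ AM) (hTb2AM : Tb2 ∈ AM) (hTb0AM : Tb0 ∈ AM)
    (hL1AM : L1 ∈ AM) (hβAM : β20 ∈ AM)
    -- Ta = 𝒯_{s₁,[g⁻]}(g⁺) : [g⁻](g⁺) ∈ s₁(g⁺)·N·Ta, and [g⁻](g⁺) = h_g
    (hTa : ∃ u ∈ N, hg * e ((hg⁻¹ : G) • ((hg : G) : G ⧸ B))
      = s1 ((hg : G) : G ⧸ B) * u * Ta)
    -- Tb2 = 𝒯_{[g⁻],s₂}(gⁿ·ξ) : s₂(gⁿξ) ∈ [g⁻](gⁿξ)·N·Tb2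
    (hTb2 : ∃ u ∈ N, s2 ((g ^ n) • ((hg * u₀ : G) : G ⧸ B))
      = (hg * e ((hg⁻¹ : G) • ((g ^ n) • ((hg * u₀ : G) : G ⧸ B)))) * u * Tb2)
    -- Tb0 = 𝒯_{[g⁻],s₀}(ξ) : s₀(ξ) ∈ [g⁻](ξ)·N·Tb0
    (hTb0 : ∃ u ∈ N, s0 ((hg * u₀ : G) : G ⧸ B)
      = (hg * e ((hg⁻¹ : G) • ((hg * u₀ : G) : G ⧸ B))) * u * Tb0)
    -- L1 = ℒ_{s₁}(g) = β_{s₁}(g, g⁺)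
    (hL1 : ∃ u ∈ N, g * s1 ((hg : G) : G ⧸ B)
      = s1 (g • ((hg : G) : G ⧸ B)) * L1 * u)
    -- β20 = β_{s₂,s₀}(gⁿ, ξ)
    (hβ : ∃ u ∈ N, g ^ n * s0 ((hg * u₀ : G) : G ⧸ B)
      = s2 ((g ^ n) • ((hg * u₀ : G) : G ⧸ B)) * β20 * u) :
    β20 = (Ta * Tb2)⁻¹ * L1 ^ n * (Ta * Tb0) := by
  have smul_mk : ∀ (a x : G), a • ((x : G) : G ⧸ B) = ((a * x : G) : G ⧸ B) :=
    fun a x => rfl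
  have conjN : ∀ x ∈ AM, ∀ u ∈ N, x⁻¹ * u * x ∈ N := fun x hx u hu => by
    have h := hnormN x⁻¹ (inv_mem hx) u hu
    rwa [inv_inv] at h
  -- powers
  have hghn : ∀ m : ℕ, g ^ m * hg = hg * L ^ m := by
    intro m; induction m with
    | zero => simp
    | succ k ih =>
      rw [pow_succ', pow_succ', mul_assoc, ih, ← mul_assoc, hgh, mul_assoc]
  -- values of e
  have e1 : e ((hg⁻¹ : G) • ((hg : G) : G ⧸ B)) = 1 := by
    rw [smul_mk, inv_mul_cancel]
    exact he 1 (one_mem Nm)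
  have e0 : e ((hg⁻¹ : G) • ((hg * u₀ : G) : G ⧸ B)) = u₀ := by
    rw [smul_mk, show hg⁻¹ * (hg * u₀) = u₀ by group]
    exact he u₀ hu₀
  set W := L ^ n * u₀ * (L ^ n)⁻¹ with hWdef
  have hWNm : W ∈ Nm := hnormNm _ (pow_mem hL n) _ hu₀
  have e2 : e ((hg⁻¹ : G) • ((g ^ n) • ((hg * u₀ : G) : G ⧸ B))) = W := by
    rw [smul_mk, smul_mk]
    have h : hg⁻¹ * (g ^ n * (hg * u₀)) = W * L ^ n := by
      rw [hWdef, ← mul_assoc (g ^ n), hghn n]; group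
    rw [h, QuotientGroup.mk_mul_of_mem _ (hAMB (pow_mem hL n))]
    exact he W hWNm
  have hgfix : g • ((hg : G) : G ⧸ B) = ((hg : G) : G ⧸ B) := by
    rw [smul_mk, hgh, QuotientGroup.mk_mul_of_mem _ (hAMB hL)]
  obtain ⟨ua, huaN, hTa'⟩ := hTa
  rw [e1, mul_one] at hTa'
  obtain ⟨u2, hu2N, hTb2'⟩ := hTb2
  rw [e2] at hTb2'
  obtain ⟨ub, hubN, hTb0'⟩ := hTb0
  rw [e0] at hTb0'
  obtain ⟨uL, huLN, hL1'⟩ := hL1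
  rw [hgfix] at hL1'
  obtain ⟨uβ, huβN, hβ'⟩ := hβ
  set S := s1 ((hg : G) : G ⧸ B) with hSdef
  -- Step A : L * Ta⁻¹ = Ta⁻¹ * L1
  have key1 : L * Ta⁻¹ * ua⁻¹ = Ta⁻¹ * ua⁻¹ * (L1 * uL) := by
    apply mul_left_cancel (a := hg)
    calc hg * (L * Ta⁻¹ * ua⁻¹) = (hg * L) * (Ta⁻¹ * ua⁻¹) := by group
      _ = (g * hg) * (Ta⁻¹ * ua⁻¹) := by rw [hgh]
      _ = g * (S * ua * Ta * (Ta⁻¹ * ua⁻¹)) := by rw [← hTa']; group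
      _ = g * S := by group
      _ = S * L1 * uL := hL1'
      _ = (S * ua * Ta) * (Ta⁻¹ * ua⁻¹ * (L1 * uL)) := by group
      _ = hg * (Ta⁻¹ * ua⁻¹ * (L1 * uL)) := by rw [← hTa']
  have hx : L * Ta⁻¹ = Ta⁻¹ * L1 := by
    have h := hUniq 1 (one_mem Nm) (L * Ta⁻¹) (mul_mem hL (inv_mem hTaAM))
      ua⁻¹ (inv_mem huaN)
      1 (one_mem Nm) (Ta⁻¹ * L1) (mul_mem (inv_mem hTaAM) hL1AM)
      (L1⁻¹ * ua⁻¹ * L1 * uL)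
      (mul_mem (conjN L1 hL1AM ua⁻¹ (inv_mem huaN)) huLN)
      (by rw [one_mul, one_mul, key1]; group)
    exact h.2.1
  -- Step B : L^n * Tb0 = Tb2 * β20
  have key2 : W * (L ^ n * Tb0) * (Tb0⁻¹ * ub * Tb0)
      = W * (Tb2 * β20) * ((Tb2 * β20)⁻¹ * u2 * (Tb2 * β20) * uβ) := by
    apply mul_left_cancel (a := hg)
    calc hg * (W * (L ^ n * Tb0) * (Tb0⁻¹ * ub * Tb0))
        = hg * (L ^ n * u₀ * ub * Tb0) := by rw [hWdef]; group
      _ = (g ^ n * hg) * (u₀ * ub * Tb0) := by rw [hghn n]; group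
      _ = g ^ n * (hg * u₀ * ub * Tb0) := by group
      _ = g ^ n * s0 ((hg * u₀ : G) : G ⧸ B) := by rw [hTb0']
      _ = s2 ((g ^ n) • ((hg * u₀ : G) : G ⧸ B)) * β20 * uβ := hβ'
      _ = (hg * W * u2 * Tb2) * β20 * uβ := by rw [hTb2']
      _ = hg * (W * (Tb2 * β20) * ((Tb2 * β20)⁻¹ * u2 * (Tb2 * β20) * uβ)) := by
          group
  have hmain : L ^ n * Tb0 = Tb2 * β20 := by
    have h := hUniq W hWNm (L ^ n * Tb0) (mul_mem (pow_mem hL n) hTb0AM)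
      (Tb0⁻¹ * ub * Tb0) (conjN Tb0 hTb0AM ub hubN)
      W hWNm (Tb2 * β20) (mul_mem hTb2AM hβAM)
      ((Tb2 * β20)⁻¹ * u2 * (Tb2 * β20) * uβ)
      (mul_mem (conjN (Tb2 * β20) (mul_mem hTb2AM hβAM) u2 hu2N) huβN)
      key2
    exact h.2.1
  have hLn : L ^ n = Ta⁻¹ * L1 ^ n * Ta := by
    have hL' : L = Ta⁻¹ * L1 * Ta := by
      rw [← hx]; group
    rw [hL', show Ta⁻¹ * L1 * Ta = Ta⁻¹ * L1 * (Ta⁻¹)⁻¹ by rw [inv_inv],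
      conj_pow, inv_inv]
  calc β20 = Tb2⁻¹ * (L ^ n * Tb0) := by rw [hmain]; group
    _ = Tb2⁻¹ * (Ta⁻¹ * L1 ^ n * Ta * Tb0) := by rw [hLn]
    _ = (Ta * Tb2)⁻¹ * L1 ^ n * (Ta * Tb0) := by group
end

section
/- Let G be a connected real semisimple Lie group without compact factors and Γ a Zariski dense discrete subgroup. Let M_Γ ⊴ M be the sign group of Γ (a closed normal finite-index subgroup of M containing M₀). Define Ω̃_{[m]} for [m] ∈ M/M_Γ via the Guivarc'h–Raugi partition L_G(Γ) = ⊔_{[m]} L_{[m]}(Γ) of the preimage in K of the limit set. Then: (a) the sets Ω̃_{[m]} are left Γ-invariant, right A·M_Γ-invariant, and partition Ω̃_G; (b) Ω̃_{[m]} = Ω̃_{[e]}·m for every m ∈ M; (c) for every θ ∈ 𝔞⁺ and every [m], the flows (Ω_{[m]}, φ_θ^t) and (Ω_{[e]}, φ_θ^t) given by right translation by exp(tθ) are topologically conjugate (via right multiplication by m, which commutes with right multiplication by A). -/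
open scoped Pointwise

/-- **Partition of `Ω̃_G` into conjugated invariant pieces (Proposition 5.12 /
Theorem 1.3(a)(b)(c)).**  Abstract setting: `G` plays the role of a connected real
linear semisimple Lie group of non-compact type, with subgroups `Γ` (Zariski dense
discrete), `K` (maximal compact), `A`, `N`, `M = Z_K(A)`, `M₀` (identity component of
`M`) and the sign group `MΓ`, a closed normal finite-index subgroup of `M` containing
`M₀`.  `LG ⊆ K` is the preimage `L_G(Γ)` of the limit set, and `Lpart m` the
Guivarc'h–Raugi piece `L_{[m]}(Γ)` of its partition (Theorem 5.10): the pieces cover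
`LG`, satisfy `L_{[m]} = L_{[e]}·m`, are right `MΓ`-invariant and pairwise disjoint
modulo `MΓ`; `hΓL` records their `Γ`-invariance, `hKAN` the uniqueness of the
`K·(AN)` Iwasawa decomposition.  `ΩG = Ω̃_G` is left `Γ`-invariant and right
`AM`-invariant with `ΩG ⊆ LG·A·N`.  Setting `Ω̃_{[m]} := (Lpart m·A·N) ∩ ΩG`,
the conclusions are: (a) each `Ω̃_{[m]}` is left `Γ`-invariant and right
`A·MΓ`-invariant, the `Ω̃_{[m]}` cover `ΩG` and pieces with distinct classes
`[m] ∈ M/MΓ` are disjoint; (b) `Ω̃_{[m]} = Ω̃_{[e]}·m`; (c) right multiplication by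
`m` is a bijection `Ω̃_{[e]} → Ω̃_{[m]}` commuting with the right translation flows by
elements of `A` — so the flows `(Ω_{[m]}, φ_θ^t)` and `(Ω_{[e]}, φ_θ^t)` are
conjugated. -/
theorem stmt17 (G : Type*) [Group G]
    (Γ K A N M M₀ MΓ : Subgroup G)
    (hM₀ : M₀ ≤ MΓ) (hMΓM : MΓ ≤ M)
    (hnormal : ∀ m ∈ M, ∀ c ∈ MΓ, m * c * m⁻¹ ∈ MΓ)
    (hfin : (MΓ.subgroupOf M).FiniteIndex)
    (hAMcomm : ∀ a ∈ A, ∀ m ∈ M, a * m = m * a)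
    (hAN : ∀ a ∈ A, ∀ v ∈ N, a * v * a⁻¹ ∈ N)
    (hMN : ∀ m ∈ M, ∀ v ∈ N, m * v * m⁻¹ ∈ N)
    (LG : Set G) (Lpart : G → Set G)
    (hLK : LG ⊆ (K : Set G))
    (hpartK : ∀ m ∈ M, Lpart m ⊆ (K : Set G))
    (hcover : LG = ⋃ m ∈ (M : Set G), Lpart m)
    (htrans : ∀ m ∈ M, Lpart m = (fun x => x * m) '' Lpart 1)
    (hMΓinv : ∀ c ∈ MΓ, (fun x => x * c) '' Lpart 1 = Lpart 1)
    (hdisjL : ∀ m ∈ M, ∀ m' ∈ M, (Lpart m ∩ Lpart m').Nonempty → m' * m⁻¹ ∈ MΓ)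
    (hΓL : ∀ m ∈ M, ∀ γ ∈ Γ,
      (fun x => γ * x) '' (Lpart m * (A : Set G) * (N : Set G))
        ⊆ Lpart m * (A : Set G) * (N : Set G))
    (hKAN : ∀ k₁ ∈ K, ∀ k₂ ∈ K, ∀ b₁ ∈ (A : Set G) * (N : Set G),
      ∀ b₂ ∈ (A : Set G) * (N : Set G), k₁ * b₁ = k₂ * b₂ → k₁ = k₂)
    (ΩG : Set G)
    (hΩΓ : ∀ γ ∈ Γ, ∀ x ∈ ΩG, γ * x ∈ ΩG)
    (hΩAM : ∀ x ∈ ΩG, ∀ a ∈ A, ∀ m ∈ M, x * a * m ∈ ΩG)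
    (hΩL : ΩG ⊆ LG * (A : Set G) * (N : Set G)) :
    -- (a) left Γ-invariance
    (∀ m ∈ M, ∀ γ ∈ Γ, ∀ x ∈ (Lpart m * (A : Set G) * (N : Set G)) ∩ ΩG,
        γ * x ∈ (Lpart m * (A : Set G) * (N : Set G)) ∩ ΩG) ∧
    -- (a) right A·MΓ-invariance
    (∀ m ∈ M, ∀ x ∈ (Lpart m * (A : Set G) * (N : Set G)) ∩ ΩG, ∀ a ∈ A, ∀ c ∈ MΓ,
        x * a * c ∈ (Lpart m * (A : Set G) * (N : Set G)) ∩ ΩG) ∧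
    -- (a) the pieces cover Ω̃_G ...
    ((⋃ m ∈ (M : Set G), (Lpart m * (A : Set G) * (N : Set G)) ∩ ΩG) = ΩG) ∧
    -- ... and pieces of distinct classes in M/MΓ are disjoint
    (∀ m ∈ M, ∀ m' ∈ M, m' * m⁻¹ ∉ MΓ →
        Disjoint ((Lpart m * (A : Set G) * (N : Set G)) ∩ ΩG)
          ((Lpart m' * (A : Set G) * (N : Set G)) ∩ ΩG)) ∧
    -- (b) Ω̃_{[m]} = Ω̃_{[e]}·m
    (∀ m ∈ M, (Lpart m * (A : Set G) * (N : Set G)) ∩ ΩG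
        = (fun x => x * m) '' ((Lpart 1 * (A : Set G) * (N : Set G)) ∩ ΩG)) ∧
    -- (c) right multiplication by m conjugates the diagonal flows
    (∀ m ∈ M, Set.BijOn (fun x => x * m)
        ((Lpart 1 * (A : Set G) * (N : Set G)) ∩ ΩG)
        ((Lpart m * (A : Set G) * (N : Set G)) ∩ ΩG)) ∧
    (∀ m ∈ M, ∀ a ∈ A, ∀ x : G, x * m * a = x * a * m) := by
  -- membership characterization of s * A * N
  have memSAN : ∀ (s : Set G) (x : G),
      x ∈ s * (A : Set G) * (N : Set G) ↔
        ∃ k ∈ s, ∃ a ∈ A, ∃ n ∈ N, k * a * n = x := by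
    intro s x
    simp only [Set.mem_mul, SetLike.mem_coe]
    constructor
    · rintro ⟨y, ⟨k, hk, a, ha, rfl⟩, n, hn, rfl⟩
      exact ⟨k, hk, a, ha, n, hn, rfl⟩
    · rintro ⟨k, hk, a, ha, n, hn, rfl⟩
      exact ⟨k * a, ⟨k, hk, a, ha, rfl⟩, n, hn, rfl⟩
  -- Lpart m is right MΓ-invariant
  have hLpartMΓ : ∀ m ∈ M, ∀ c ∈ MΓ, ∀ k ∈ Lpart m, k * c ∈ Lpart m := by
    intro m hm c hc k hk
    rw [htrans m hm] at hk ⊢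
    obtain ⟨k₀, hk₀, rfl⟩ := hk
    have h1 : m * c * m⁻¹ ∈ MΓ := hnormal m hm c hc
    have h2 : k₀ * (m * c * m⁻¹) ∈ Lpart 1 := by
      rw [← hMΓinv _ h1]; exact ⟨k₀, hk₀, rfl⟩
    exact ⟨_, h2, by group⟩
  -- right A-invariance of S m
  have hRA : ∀ (s : Set G), ∀ x ∈ s * (A : Set G) * (N : Set G), ∀ a ∈ A,
      x * a ∈ s * (A : Set G) * (N : Set G) := by
    intro s x hx a ha
    obtain ⟨k, hk, a', ha', n, hn, rfl⟩ := (memSAN s x).1 hx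
    refine (memSAN s _).2 ⟨k, hk, a' * a, mul_mem ha' ha, a⁻¹ * n * a, ?_, by group⟩
    have := hAN a⁻¹ (inv_mem ha) n hn
    simpa [mul_assoc] using this
  -- right MΓ-invariance of S m
  have hRC : ∀ m ∈ M, ∀ x ∈ Lpart m * (A : Set G) * (N : Set G), ∀ c ∈ MΓ,
      x * c ∈ Lpart m * (A : Set G) * (N : Set G) := by
    intro m hm x hx c hc
    obtain ⟨k, hk, a, ha, n, hn, rfl⟩ := (memSAN _ x).1 hx
    have hcM : c ∈ M := hMΓM hc
    have hn' : c⁻¹ * n * c ∈ N := by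
      have := hMN c⁻¹ (inv_mem hcM) n hn
      simpa [mul_assoc] using this
    refine (memSAN _ _).2 ⟨k * c, hLpartMΓ m hm c hc k hk, a, ha, c⁻¹ * n * c, hn', ?_⟩
    have hca : c * a = a * c := (hAMcomm a ha c hcM).symm
    calc k * c * a * (c⁻¹ * n * c) = k * (c * a) * (c⁻¹ * n * c) := by group
      _ = k * (a * c) * (c⁻¹ * n * c) := by rw [hca]
      _ = k * a * n * c := by group
  -- S m = (· * m) '' S 1
  have hB : ∀ m ∈ M, Lpart m * (A : Set G) * (N : Set G)
      = (fun x => x * m) '' (Lpart 1 * (A : Set G) * (N : Set G)) := by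
    intro m hm
    ext x
    constructor
    · intro hx
      obtain ⟨k, hk, a, ha, n, hn, rfl⟩ := (memSAN _ x).1 hx
      rw [htrans m hm] at hk
      obtain ⟨k₀, hk₀, rfl⟩ := hk
      have hn' : m * n * m⁻¹ ∈ N := hMN m hm n hn
      refine ⟨k₀ * a * (m * n * m⁻¹),
        (memSAN _ _).2 ⟨k₀, hk₀, a, ha, m * n * m⁻¹, hn', rfl⟩, ?_⟩
      show k₀ * a * (m * n * m⁻¹) * m = k₀ * m * a * n
      calc k₀ * a * (m * n * m⁻¹) * m = k₀ * (a * m) * n := by group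
        _ = k₀ * (m * a) * n := by rw [hAMcomm a ha m hm]
        _ = k₀ * m * a * n := by group
    · rintro ⟨y, hy, rfl⟩
      obtain ⟨k₀, hk₀, a, ha, n, hn, rfl⟩ := (memSAN _ y).1 hy
      have hkm : k₀ * m ∈ Lpart m := by
        rw [htrans m hm]; exact ⟨k₀, hk₀, rfl⟩
      have hn' : m⁻¹ * n * m ∈ N := by
        have := hMN m⁻¹ (inv_mem hm) n hn
        simpa [mul_assoc] using this
      refine (memSAN _ _).2 ⟨k₀ * m, hkm, a, ha, m⁻¹ * n * m, hn', ?_⟩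
      calc k₀ * m * a * (m⁻¹ * n * m) = k₀ * (m * a) * (m⁻¹ * n * m) := by group
        _ = k₀ * (a * m) * (m⁻¹ * n * m) := by rw [hAMcomm a ha m hm]
        _ = k₀ * a * n * m := by group
  -- (b) with ΩG
  have hb : ∀ m ∈ M, (Lpart m * (A : Set G) * (N : Set G)) ∩ ΩG
      = (fun x => x * m) '' ((Lpart 1 * (A : Set G) * (N : Set G)) ∩ ΩG) := by
    intro m hm
    ext x
    constructor
    · rintro ⟨hxS, hxΩ⟩
      rw [hB m hm] at hxS
      obtain ⟨y, hy, rfl⟩ := hxS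
      have hyΩ : y ∈ ΩG := by
        have := hΩAM (y * m) hxΩ 1 (one_mem A) m⁻¹ (inv_mem hm)
        simpa using this
      exact ⟨y, ⟨hy, hyΩ⟩, rfl⟩
    · rintro ⟨y, ⟨hyS, hyΩ⟩, rfl⟩
      refine ⟨?_, ?_⟩
      · rw [hB m hm]; exact ⟨y, hyS, rfl⟩
      · have := hΩAM y hyΩ 1 (one_mem A) m hm
        simpa using this
  refine ⟨?_, ?_, ?_, ?_, hb, ?_, ?_⟩
  · -- left Γ-invariance
    intro m hm γ hγ x ⟨hxS, hxΩ⟩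
    exact ⟨hΓL m hm γ hγ ⟨x, hxS, rfl⟩, hΩΓ γ hγ x hxΩ⟩
  · -- right A·MΓ-invariance
    intro m hm x ⟨hxS, hxΩ⟩ a ha c hc
    exact ⟨hRC m hm _ (hRA _ x hxS a ha) c hc, hΩAM x hxΩ a ha c (hMΓM hc)⟩
  · -- cover
    ext x
    simp only [Set.mem_iUnion, Set.mem_inter_iff, SetLike.mem_coe]
    constructor
    · rintro ⟨m, hm, _, hxΩ⟩; exact hxΩ
    · intro hxΩ
      have hx : x ∈ LG * (A : Set G) * (N : Set G) := hΩL hxΩ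
      obtain ⟨k, hkLG, a, ha, n, hn, rfl⟩ := (memSAN LG _).1 hx
      rw [hcover] at hkLG
      simp only [Set.mem_iUnion, SetLike.mem_coe] at hkLG
      obtain ⟨m, hm, hk⟩ := hkLG
      exact ⟨m, hm, (memSAN _ _).2 ⟨k, hk, a, ha, n, hn, rfl⟩, hxΩ⟩
  · -- disjointness
    intro m hm m' hm' hne
    rw [Set.disjoint_left]
    rintro x ⟨hxS, _⟩ ⟨hxS', _⟩
    obtain ⟨k, hk, a, ha, n, hn, hx⟩ := (memSAN _ x).1 hxS
    obtain ⟨k', hk', a', ha', n', hn', hx'⟩ := (memSAN _ x).1 hxS'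
    have hkk' : k = k' := by
      refine hKAN k (hpartK m hm hk) k' (hpartK m' hm' hk')
        (a * n) ⟨a, ha, n, hn, rfl⟩ (a' * n') ⟨a', ha', n', hn', rfl⟩ ?_
      rw [← mul_assoc, ← mul_assoc, hx, hx']
    exact hne (hdisjL m hm m' hm' ⟨k, hk, hkk' ▸ hk'⟩)
  · -- (c) bijection
    intro m hm
    rw [hb m hm]
    exact (mul_left_injective m).injOn.bijOn_image
  · -- flow commutation
    intro m hm a ha x
    rw [mul_assoc, mul_assoc, hAMcomm a ha m hm]
end
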